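/- Let k ≥ 1, let G = (V,E) be a k-colorable chordal graph, and let T be a clique of G such that (G,T) can be obtained from (G₁,T) and (G₂,T) by a join operation. If one of C^c_k(G₁,T) and C^c_k(G₂,T) is an (m,k)-color-complete graph (with m = |T|), then C^c_k(G,T) equals the other graph (up to label-preserving isomorphism). If both C^c_k(G₁,T) and C^c_k(G₂,T) are forests satisfying the injective neighborhood property, then C^c_k(G,T) is a forest satisfying the injective neighborhood property. -/

import Mathlib

open SimpleGraph

/-- A proper `k`-coloring of a graph. -/
def IsColoring {W : Type*} (G : SimpleGraph W) (k : ℕ) (α : W → Fin k) : Prop :=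
  ∀ u v : W, G.Adj u v → α u ≠ α v

/-- The `k`-color graph `C_k(G)`: nodes are proper `k`-colorings of `G`,
two colorings being adjacent iff they differ on exactly one vertex. -/
def colorGraph {W : Type*} (G : SimpleGraph W) (k : ℕ) :
    SimpleGraph {α : W → Fin k // IsColoring G k α} where
  Adj α β := ∃! w, α.1 w ≠ β.1 w
  symm := ⟨by
    rintro α β ⟨w, hw, hu⟩
    exact ⟨w, hw.symm, fun u hu' => hu u hu'.symm⟩⟩
  loopless := ⟨by
    rintro α ⟨w, hw, -⟩
    exact hw rfl⟩

/-- The subgraph of a labeled graph consisting of the edges between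
equally labeled nodes. -/
def sameLabelSub {N L : Type*} (H : SimpleGraph N) (f : N → L) : SimpleGraph N where
  Adj x y := H.Adj x y ∧ f x = f y
  symm := ⟨fun _ _ h => ⟨h.1.symm, h.2.symm⟩⟩
  loopless := ⟨fun x h => H.loopless.irrefl x h.1⟩

/-- The quotient graph obtained from a labeled graph by contracting every
(maximal) connected set of equally labeled nodes (i.e. every label component)
into a single node. -/
def quotGraph {N L : Type*} (H : SimpleGraph N) (f : N → L) :
    SimpleGraph (sameLabelSub H f).ConnectedComponent where
  Adj c d := c ≠ d ∧ ∃ a b, (sameLabelSub H f).connectedComponentMk a = c ∧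
      (sameLabelSub H f).connectedComponentMk b = d ∧ H.Adj a b
  symm := ⟨by
    rintro c d ⟨hne, a, b, ha, hb, hab⟩
    exact ⟨hne.symm, b, a, hb, ha, hab.symm⟩⟩
  loopless := ⟨fun c h => h.1 rfl⟩

/-- The common label of a label component. -/
def quotLabel {N L : Type*} (H : SimpleGraph N) (f : N → L) :
    (sameLabelSub H f).ConnectedComponent → L :=
  SimpleGraph.ConnectedComponent.lift f (by
    intro v w p hp
    clear hp
    induction p with
    | nil => rfl
    | cons h _ ih => exact (show H.Adj _ _ ∧ f _ = f _ from h).2.trans ih)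

/-- The label of a coloring: its restriction to the terminal set `T`. -/
def csgLabelFun {W : Type*} (G : SimpleGraph W) (k : ℕ) (T : Set W) :
    {α : W → Fin k // IsColoring G k α} → (T → Fin k) :=
  fun α t => α.1 t.1

/-- The node set of the contracted solution graph: the label components. -/
abbrev CSGNode {W : Type*} (G : SimpleGraph W) (k : ℕ) (T : Set W) :=
  (sameLabelSub (colorGraph G k) (csgLabelFun G k T)).ConnectedComponent

/-- The contracted solution graph `C^c_k(G,T)`. -/
def CSG {W : Type*} (G : SimpleGraph W) (k : ℕ) (T : Set W) : SimpleGraph (CSGNode G k T) :=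
  quotGraph (colorGraph G k) (csgLabelFun G k T)

/-- The `γ`-node of the contracted solution graph: the label component containing `γ`. -/
def csgNode {W : Type*} (G : SimpleGraph W) (k : ℕ) (T : Set W)
    (γ : {α : W → Fin k // IsColoring G k α}) : CSGNode G k T :=
  (sameLabelSub (colorGraph G k) (csgLabelFun G k T)).connectedComponentMk γ

/-- The label of a node of the contracted solution graph: the common restriction
to `T` of its colorings. -/
def csgLabel {W : Type*} (G : SimpleGraph W) (k : ℕ) (T : Set W) :
    CSGNode G k T → (T → Fin k) :=
  quotLabel (colorGraph G k) (csgLabelFun G k T)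

/-- The restriction of a proper coloring to an induced subgraph. -/
def restrictColoring {W : Type*} (G : SimpleGraph W) (k : ℕ) (S : Set W)
    (γ : {α : W → Fin k // IsColoring G k α}) :
    {α : S → Fin k // IsColoring (G.induce S) k α} :=
  ⟨fun u => γ.1 u.1, fun u w h => γ.2 u.1 w.1 h⟩

/-- A graph is chordal if it contains no induced cycle of length greater than 3. -/
def Chordal {W : Type*} (G : SimpleGraph W) : Prop :=
  ∀ n : ℕ, 4 ≤ n → IsEmpty (SimpleGraph.cycleGraph n ↪g G)

/-- `S` is a vertex cut: `G - S` is disconnected. -/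
def IsVertexCut {W : Type*} (G : SimpleGraph W) (S : Set W) : Prop :=
  ¬ (G.induce Sᶜ).Preconnected

/-- `G` is `l`-connected. -/
def LConnected {W : Type*} (G : SimpleGraph W) (l : ℕ) : Prop :=
  G.Connected ∧ l + 1 ≤ Nat.card W ∧ ∀ S : Set W, IsVertexCut G S → l ≤ S.ncard

/-- A labeled graph `(H,ℓ)`, whose labels are `k`-colorings of the complete graph
on a vertex (type) `S`, is an `(|S|,k)`-color-complete graph. -/
def IsColorComplete {N S : Type*} (k : ℕ) (H : SimpleGraph N) (ℓ : N → S → Fin k) : Prop :=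
  (∀ x, Function.Injective (ℓ x)) ∧
  (∀ f : S → Fin k, Function.Injective f → ∃! x, ℓ x = f) ∧
  (∀ x y, H.Adj x y ↔ ∃! s, ℓ x s ≠ ℓ y s)

/-- The injective neighborhood property. -/
def INP {N L : Type*} (H : SimpleGraph N) (ℓ : N → L) : Prop :=
  ∀ u v w : N, H.Adj u v → H.Adj u w → v ≠ w → ℓ v ≠ ℓ w

/-- The weight `w(P)` of a walk `P` in a labeled graph: the sum over the vertices `x`
of `P` of the number of colors used by labels of neighbors of `x` in `P` but not by
the label of `x`. -/
noncomputable def walkWeight {N S : Type*} {k : ℕ} {G : SimpleGraph N} (ℓ : N → S → Fin k)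
    {a b : N} (P : G.Walk a b) : ℕ :=
  letI := Classical.decEq N
  ∑ x ∈ P.support.toFinset,
    ((⋃ y ∈ P.toSubgraph.neighborSet x, Set.range (ℓ y)) \ Set.range (ℓ x)).ncard

/-- The terminal set `T`, viewed as a set of vertices of the induced subgraph on `Vi`. -/
def Tsub {V : Type*} (Vi T : Set V) : Set ↥Vi := {u | u.1 ∈ T}


section Walks
variable {N N' : Type*} {H : SimpleGraph N} {H' : SimpleGraph N'}

/-- A walk has no immediate backtrack: vertices at distance 2 are distinct. -/
def NoBT : {u v : N} → H.Walk u v → Prop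
  | _, _, .nil => True
  | _, _, .cons _ .nil => True
  | u, _, .cons _ (.cons (v := c) h' q) => u ≠ c ∧ NoBT (Walk.cons h' q)

lemma noBT_tail {u b v : N} (h : H.Adj u b) (q : H.Walk b v) :
    NoBT (Walk.cons h q) → NoBT q := by
  cases q with
  | nil => intro _; trivial
  | cons h' r => exact fun hn => hn.2

lemma walk_closed_nodup_nil {x : N} (r : H.Walk x x) (h : r.support.Nodup) : r = Walk.nil := by
  cases r with
  | nil => rfl
  | cons h' p =>
    exfalso
    rw [Walk.support_cons] at h
    exact (List.nodup_cons.mp h).1 p.end_mem_support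

lemma noBT_isPath (hH : H.IsAcyclic) : ∀ {u v : N} (p : H.Walk u v), NoBT p → p.IsPath := by
  classical
  intro u v p
  induction p with
  | nil => intro _; exact Walk.IsPath.nil
  | @cons u b v h q ih =>
    intro hn
    have hq : q.IsPath := ih (noBT_tail h q hn)
    by_cases hu : u ∈ q.support
    · exfalso
      have hq1 : (q.takeUntil u hu).IsPath := hq.takeUntil hu
      have hs : (Walk.cons h.symm Walk.nil : H.Walk b u).IsPath := by
        rw [Walk.isPath_def]
        simp [h.ne']
      have := isAcyclic_iff_path_unique.mp hH ⟨q.takeUntil u hu, hq1⟩ ⟨Walk.cons h.symm Walk.nil, hs⟩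
      have heq : q.takeUntil u hu = Walk.cons h.symm Walk.nil := congrArg Subtype.val this
      have hspec := q.take_spec hu
      rw [heq] at hspec
      rw [Walk.cons_append, Walk.nil_append] at hspec
      rw [← hspec] at hn
      exact hn.1 rfl
    · exact hq.cons hu

lemma noBT_of_nodup : ∀ {u v : N} (p : H.Walk u v), p.support.Nodup → NoBT p
  | _, _, .nil, _ => trivial
  | _, _, .cons _ .nil, _ => trivial
  | u, _, .cons h (.cons (v := c) h' q), hnd => by
    rw [Walk.support_cons] at hnd
    obtain ⟨hu, hnd'⟩ := List.nodup_cons.mp hnd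
    refine ⟨fun hc => hu ?_, noBT_of_nodup _ hnd'⟩
    subst hc
    rw [Walk.support_cons]
    exact List.mem_cons_of_mem _ q.start_mem_support

lemma noBT_map (f : H →g H') (hf : ∀ a b c : N, H.Adj a b → H.Adj b c → a ≠ c → f a ≠ f c) :
    ∀ {u v : N} (p : H.Walk u v), NoBT p → NoBT (p.map f)
  | _, _, .nil, _ => trivial
  | _, _, .cons _ .nil, _ => trivial
  | u, _, .cons h (.cons (v := c) h' q), hn =>
    ⟨hf _ _ _ h h' hn.1, noBT_map f hf (Walk.cons h' q) hn.2⟩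

lemma acyclic_of_locally_injective (f : H →g H')
    (hf : ∀ a b c : N, H.Adj a b → H.Adj b c → a ≠ c → f a ≠ f c)
    (hH' : H'.IsAcyclic) : H.IsAcyclic := by
  intro v c hc
  have h3 := hc.three_le_length
  have hnd := hc.support_nodup
  cases c with
  | nil => simp at h3
  | @cons _ b _ h q =>
    rw [Walk.support_cons, List.tail_cons] at hnd
    have hnbt : NoBT (Walk.cons h q) := by
      cases q with
      | nil => trivial
      | @cons _ c2 _ h' r =>
        refine ⟨fun hvc => ?_, noBT_of_nodup _ hnd⟩
        subst hvc
        have hr : r.support.Nodup := by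
          rw [Walk.support_cons] at hnd
          exact (List.nodup_cons.mp hnd).2
        have hrn := walk_closed_nodup_nil r hr
        subst hrn
        simp [Walk.length_cons] at h3
    have hmap := noBT_isPath hH' _ (noBT_map f hf _ hnbt)
    rw [Walk.map_cons, Walk.isPath_def, Walk.support_cons] at hmap
    exact (List.nodup_cons.mp hmap).1 (by simpa using (q.map f).end_mem_support)
end Walks
section Glue
variable {V : Type} (G : SimpleGraph V) (k : ℕ) (T A B : Set V)

/-- agreement of partial colorings on the overlap -/
def Agrees (γ₁ : A → Fin k) (γ₂ : B → Fin k) : Prop :=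
  ∀ (t : V) (h1 : t ∈ A) (h2 : t ∈ B), γ₁ ⟨t, h1⟩ = γ₂ ⟨t, h2⟩

variable (hcup : A ∪ B = Set.univ)

open Classical in
noncomputable def glue (γ₁ : A → Fin k) (γ₂ : B → Fin k) : V → Fin k := fun u =>
  if h : u ∈ A then γ₁ ⟨u, h⟩
  else γ₂ ⟨u, (show u ∈ A ∪ B from hcup ▸ Set.mem_univ u).resolve_left h⟩

lemma glue_A {γ₁ : A → Fin k} {γ₂ : B → Fin k} {u : V} (h : u ∈ A) :
    glue k A B hcup γ₁ γ₂ u = γ₁ ⟨u, h⟩ := dif_pos h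

lemma glue_B {γ₁ : A → Fin k} {γ₂ : B → Fin k} (hag : Agrees k A B γ₁ γ₂) {u : V} (h : u ∈ B) :
    glue k A B hcup γ₁ γ₂ u = γ₂ ⟨u, h⟩ := by
  by_cases hA : u ∈ A
  · rw [glue_A k A B hcup hA]; exact hag u hA h
  · exact dif_neg hA

lemma glue_isColoring
    (hedge : ∀ u w : V, G.Adj u w → (u ∈ A ∧ w ∈ A) ∨ (u ∈ B ∧ w ∈ B))
    {γ₁ : A → Fin k} {γ₂ : B → Fin k} (hag : Agrees k A B γ₁ γ₂)
    (h1 : IsColoring (G.induce A) k γ₁) (h2 : IsColoring (G.induce B) k γ₂) :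
    IsColoring G k (glue k A B hcup γ₁ γ₂) := by
  intro u w huw
  rcases hedge u w huw with ⟨hu, hw⟩ | ⟨hu, hw⟩
  · rw [glue_A k A B hcup hu, glue_A k A B hcup hw]
    exact h1 ⟨u, hu⟩ ⟨w, hw⟩ huw
  · rw [glue_B k A B hcup hag hu, glue_B k A B hcup hag hw]
    exact h2 ⟨u, hu⟩ ⟨w, hw⟩ huw

/-- Glue two colorings of the induced subgraphs into a coloring of `G`. -/
noncomputable def gl (hedge : ∀ u w : V, G.Adj u w → (u ∈ A ∧ w ∈ A) ∨ (u ∈ B ∧ w ∈ B))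
    (γ₁ : {α : A → Fin k // IsColoring (G.induce A) k α})
    (γ₂ : {α : B → Fin k // IsColoring (G.induce B) k α})
    (hag : Agrees k A B γ₁.1 γ₂.1) : {α : V → Fin k // IsColoring G k α} :=
  ⟨glue k A B hcup γ₁.1 γ₂.1, glue_isColoring G k A B hcup hedge hag γ₁.2 γ₂.2⟩

lemma restrict_gl_A (hedge) (γ₁) (γ₂) (hag : Agrees k A B γ₁.1 γ₂.1) :
    restrictColoring G k A (gl G k A B hcup hedge γ₁ γ₂ hag) = γ₁ :=
  Subtype.ext (funext fun u => by
    show glue k A B hcup γ₁.1 γ₂.1 u.1 = γ₁.1 u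
    rw [glue_A k A B hcup u.2])

lemma restrict_gl_B (hedge) (γ₁) (γ₂) (hag : Agrees k A B γ₁.1 γ₂.1) :
    restrictColoring G k B (gl G k A B hcup hedge γ₁ γ₂ hag) = γ₂ :=
  Subtype.ext (funext fun u => by
    show glue k A B hcup γ₁.1 γ₂.1 u.1 = γ₂.1 u
    rw [glue_B k A B hcup hag u.2])

lemma gl_restrict (hedge) (γ : {α : V → Fin k // IsColoring G k α}) :
    gl G k A B hcup hedge (restrictColoring G k A γ) (restrictColoring G k B γ)
      (fun _ _ _ => rfl) = γ :=
  Subtype.ext (funext fun u => by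
    by_cases h : u ∈ A
    · exact glue_A k A B hcup h
    · exact dif_neg h)

end Glue
section Proj
variable {V : Type} (G : SimpleGraph V) (k : ℕ) (T A B : Set V)

lemma label_eq_of_comp_eq {γ δ : {α : V → Fin k // IsColoring G k α}}
    (h : csgNode G k T γ = csgNode G k T δ) :
    csgLabelFun G k T γ = csgLabelFun G k T δ :=
  congrArg (csgLabel G k T) h

lemma step_proj {γ δ : {α : V → Fin k // IsColoring G k α}}
    (h : (sameLabelSub (colorGraph G k) (csgLabelFun G k T)).Adj γ δ) :
    csgNode (G.induce A) k (Tsub A T) (restrictColoring G k A γ) =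
      csgNode (G.induce A) k (Tsub A T) (restrictColoring G k A δ) := by
  classical
  obtain ⟨⟨w, hw, hun⟩, hlab⟩ := h
  by_cases hwA : w ∈ A
  · apply SimpleGraph.ConnectedComponent.sound
    apply SimpleGraph.Adj.reachable
    constructor
    · exact ⟨⟨w, hwA⟩, hw, fun u hu => Subtype.ext (hun u.1 hu)⟩
    · funext t
      exact congrFun hlab ⟨t.1.1, t.2⟩
  · have heq : restrictColoring G k A γ = restrictColoring G k A δ := by
      apply Subtype.ext; funext u
      by_contra hne
      exact hwA (hun u.1 hne ▸ u.2)
    rw [heq]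

/-- The projection from the contracted solution graph of `G` to that of `G[A]`. -/
def projC : CSGNode G k T → CSGNode (G.induce A) k (Tsub A T) :=
  SimpleGraph.ConnectedComponent.lift
    (fun γ => csgNode (G.induce A) k (Tsub A T) (restrictColoring G k A γ))
    (by
      intro v w p hp
      clear hp
      induction p with
      | nil => rfl
      | cons h _ ih => exact (step_proj G k T A h).trans ih)

lemma projC_mk (γ : {α : V → Fin k // IsColoring G k α}) :
    projC G k T A (csgNode G k T γ) =
      csgNode (G.induce A) k (Tsub A T) (restrictColoring G k A γ) := rfl

lemma label_comm (hA : T ⊆ A) (c : CSGNode G k T) (t : V) (ht : t ∈ T) :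
    csgLabel (G.induce A) k (Tsub A T) (projC G k T A c) ⟨⟨t, hA ht⟩, ht⟩ =
      csgLabel G k T c ⟨t, ht⟩ := by
  induction c using SimpleGraph.ConnectedComponent.ind
  rfl

end Proj
section Lift
variable {V : Type} (G : SimpleGraph V) (k : ℕ) (T A B : Set V)
  (hcap : A ∩ B = T) (hcup : A ∪ B = Set.univ)
  (hedge : ∀ u w : V, G.Adj u w → (u ∈ A ∧ w ∈ A) ∨ (u ∈ B ∧ w ∈ B))


lemma glue_nA {γ₁ : ↥A → Fin k} {γ₂ : ↥B → Fin k} {u : V} (h : u ∉ A) :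
    glue k A B hcup γ₁ γ₂ u =
      γ₂ ⟨u, (show u ∈ A ∪ B from hcup ▸ Set.mem_univ u).resolve_left h⟩ := dif_neg h

include hcap in
lemma lift_walk_A
    {γ₁ δ₁ : {α : ↥A → Fin k // IsColoring (G.induce A) k α}}
    (w : (sameLabelSub (colorGraph (G.induce A) k)
        (csgLabelFun (G.induce A) k (Tsub A T))).Walk γ₁ δ₁)
    (γ₂ : {α : ↥B → Fin k // IsColoring (G.induce B) k α})
    (hag : Agrees k A B γ₁.1 γ₂.1) (hag' : Agrees k A B δ₁.1 γ₂.1) :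
    (sameLabelSub (colorGraph G k) (csgLabelFun G k T)).Reachable
      (gl G k A B hcup hedge γ₁ γ₂ hag) (gl G k A B hcup hedge δ₁ γ₂ hag') := by
  classical
  have hA : T ⊆ A := fun t ht => ((hcap ▸ ht) : t ∈ A ∩ B).1
  induction w with
  | nil => exact SimpleGraph.Reachable.refl _
  | @cons γ₁ c₁ δ₁ h p ih =>
    have hagc : Agrees k A B c₁.1 γ₂.1 := by
      intro t h1 h2
      have ht : t ∈ T := hcap ▸ (⟨h1, h2⟩ : t ∈ A ∩ B)
      have hval : γ₁.1 ⟨t, h1⟩ = c₁.1 ⟨t, h1⟩ := congrFun h.2 ⟨⟨t, h1⟩, ht⟩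
      rw [← hval]; exact hag t h1 h2
    refine (SimpleGraph.Adj.reachable ?_).trans (ih hagc hag')
    obtain ⟨w₁, hw₁, hun⟩ := h.1
    refine ⟨⟨w₁.1, ?_, ?_⟩, ?_⟩
    · show glue k A B hcup γ₁.1 γ₂.1 w₁.1 ≠ glue k A B hcup c₁.1 γ₂.1 w₁.1
      rw [glue_A k A B hcup w₁.2, glue_A k A B hcup w₁.2]
      exact hw₁
    · intro u hu
      have hu' : glue k A B hcup γ₁.1 γ₂.1 u ≠ glue k A B hcup c₁.1 γ₂.1 u := hu
      by_cases huA : u ∈ A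
      · rw [glue_A k A B hcup huA, glue_A k A B hcup huA] at hu'
        exact congrArg Subtype.val (hun ⟨u, huA⟩ hu')
      · exfalso
        apply hu'
        rw [glue_nA k A B hcup huA, glue_nA k A B hcup huA]
    · funext t
      show glue k A B hcup γ₁.1 γ₂.1 t.1 = glue k A B hcup c₁.1 γ₂.1 t.1
      rw [glue_A k A B hcup (hA t.2), glue_A k A B hcup (hA t.2)]
      exact congrFun h.2 ⟨⟨t.1, hA t.2⟩, t.2⟩

include hcap in
lemma lift_walk_B
    {γ₂ δ₂ : {α : ↥B → Fin k // IsColoring (G.induce B) k α}}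
    (w : (sameLabelSub (colorGraph (G.induce B) k)
        (csgLabelFun (G.induce B) k (Tsub B T))).Walk γ₂ δ₂)
    (γ₁ : {α : ↥A → Fin k // IsColoring (G.induce A) k α})
    (hag : Agrees k A B γ₁.1 γ₂.1) (hag' : Agrees k A B γ₁.1 δ₂.1) :
    (sameLabelSub (colorGraph G k) (csgLabelFun G k T)).Reachable
      (gl G k A B hcup hedge γ₁ γ₂ hag) (gl G k A B hcup hedge γ₁ δ₂ hag') := by
  classical
  have hA : T ⊆ A := fun t ht => ((hcap ▸ ht) : t ∈ A ∩ B).1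
  induction w with
  | nil => exact SimpleGraph.Reachable.refl _
  | @cons γ₂ c₂ δ₂ h p ih =>
    have hagc : Agrees k A B γ₁.1 c₂.1 := by
      intro t h1 h2
      have ht : t ∈ T := hcap ▸ (⟨h1, h2⟩ : t ∈ A ∩ B)
      have hval : γ₂.1 ⟨t, h2⟩ = c₂.1 ⟨t, h2⟩ := congrFun h.2 ⟨⟨t, h2⟩, ht⟩
      rw [← hval]; exact hag t h1 h2
    refine (SimpleGraph.Adj.reachable ?_).trans (ih hagc hag')
    obtain ⟨w₂, hw₂, hun⟩ := h.1
    have hw2T : w₂.1 ∉ T := by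
      intro hT
      exact hw₂ (congrFun h.2 ⟨w₂, hT⟩)
    have hw2A : w₂.1 ∉ A := by
      intro hA'
      exact hw2T (hcap ▸ (⟨hA', w₂.2⟩ : w₂.1 ∈ A ∩ B))
    refine ⟨⟨w₂.1, ?_, ?_⟩, ?_⟩
    · show glue k A B hcup γ₁.1 γ₂.1 w₂.1 ≠ glue k A B hcup γ₁.1 c₂.1 w₂.1
      rw [glue_nA k A B hcup hw2A, glue_nA k A B hcup hw2A]
      exact hw₂
    · intro u hu
      have hu' : glue k A B hcup γ₁.1 γ₂.1 u ≠ glue k A B hcup γ₁.1 c₂.1 u := hu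
      by_cases huA : u ∈ A
      · exfalso
        apply hu'
        rw [glue_A k A B hcup huA, glue_A k A B hcup huA]
      · rw [glue_nA k A B hcup huA, glue_nA k A B hcup huA] at hu'
        exact congrArg Subtype.val (hun _ hu')
    · funext t
      show glue k A B hcup γ₁.1 γ₂.1 t.1 = glue k A B hcup γ₁.1 c₂.1 t.1
      rw [glue_A k A B hcup (hA t.2), glue_A k A B hcup (hA t.2)]

include hcap hcup hedge in
lemma comp_inj {γ δ : {α : V → Fin k // IsColoring G k α}}
    (h1 : csgNode (G.induce A) k (Tsub A T) (restrictColoring G k A γ) =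
      csgNode (G.induce A) k (Tsub A T) (restrictColoring G k A δ))
    (h2 : csgNode (G.induce B) k (Tsub B T) (restrictColoring G k B γ) =
      csgNode (G.induce B) k (Tsub B T) (restrictColoring G k B δ)) :
    csgNode G k T γ = csgNode G k T δ := by
  obtain ⟨w₁⟩ := SimpleGraph.ConnectedComponent.exact h1
  obtain ⟨w₂⟩ := SimpleGraph.ConnectedComponent.exact h2
  have hlabA := label_eq_of_comp_eq (G.induce A) k (Tsub A T) h1
  have hag1 : Agrees k A B (restrictColoring G k A γ).1 (restrictColoring G k B γ).1 :=
    fun _ _ _ => rfl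
  have hag2 : Agrees k A B (restrictColoring G k A δ).1 (restrictColoring G k B γ).1 := by
    intro t ha hb
    have ht : t ∈ T := hcap ▸ (⟨ha, hb⟩ : t ∈ A ∩ B)
    exact (congrFun hlabA ⟨⟨t, ha⟩, ht⟩).symm
  have hag3 : Agrees k A B (restrictColoring G k A δ).1 (restrictColoring G k B δ).1 :=
    fun _ _ _ => rfl
  have R1 := lift_walk_A G k T A B hcap hcup hedge w₁ (restrictColoring G k B γ) hag1 hag2
  have R2 := lift_walk_B G k T A B hcap hcup hedge w₂ (restrictColoring G k A δ) hag2 hag3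
  apply SimpleGraph.ConnectedComponent.sound
  rw [← gl_restrict G k A B hcup hedge γ, ← gl_restrict G k A B hcup hedge δ]
  exact R1.trans R2

end Lift
section Edge
variable {V : Type} (G : SimpleGraph V) (k : ℕ) (T A B : Set V)

lemma quot_adj_label_ne {N L : Type*} (H : SimpleGraph N) (f : N → L)
    {c d : (sameLabelSub H f).ConnectedComponent}
    (h : (quotGraph H f).Adj c d) : quotLabel H f c ≠ quotLabel H f d := by
  obtain ⟨hne, a, b, ha, hb, hab⟩ := h
  intro heq
  apply hne
  rw [← ha, ← hb]
  apply SimpleGraph.ConnectedComponent.sound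
  apply SimpleGraph.Adj.reachable
  refine ⟨hab, ?_⟩
  show quotLabel H f ((sameLabelSub H f).connectedComponentMk a) =
    quotLabel H f ((sameLabelSub H f).connectedComponentMk b)
  rw [ha, hb]
  exact heq

lemma adj_proj (hA : T ⊆ A) {c d : CSGNode G k T} (h : (CSG G k T).Adj c d) :
    (CSG (G.induce A) k (Tsub A T)).Adj (projC G k T A c) (projC G k T A d) := by
  have hlab : csgLabel G k T c ≠ csgLabel G k T d := quot_adj_label_ne _ _ h
  obtain ⟨hne, γ, δ, hγ, hδ, hadj⟩ := h
  have hlab' : csgLabelFun G k T γ ≠ csgLabelFun G k T δ := by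
    rw [← hγ, ← hδ] at hlab; exact hlab
  obtain ⟨t, htne⟩ := Function.ne_iff.mp hlab'
  obtain ⟨w, hw, hun⟩ := hadj
  have hwt : w = t.1 := (hun t.1 htne).symm
  constructor
  · intro he
    have h2 := congrArg (fun x => csgLabel (G.induce A) k (Tsub A T) x ⟨⟨t.1, hA t.2⟩, t.2⟩) he
    simp only [label_comm G k T A hA] at h2
    rw [← hγ, ← hδ] at h2
    exact htne h2
  · refine ⟨restrictColoring G k A γ, restrictColoring G k A δ, ?_, ?_, ?_⟩
    · rw [← hγ]; rfl
    · rw [← hδ]; rfl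
    · exact ⟨⟨w, hA (hwt ▸ t.2)⟩, hw, fun u hu => Subtype.ext (hun u.1 hu)⟩

variable (hcap : A ∩ B = T) (hcup : A ∪ B = Set.univ)
  (hedge : ∀ u w : V, G.Adj u w → (u ∈ A ∧ w ∈ A) ∨ (u ∈ B ∧ w ∈ B))

include hcap hcup hedge in
lemma comp_inj' {c d : CSGNode G k T} (h1 : projC G k T A c = projC G k T A d)
    (h2 : projC G k T B c = projC G k T B d) : c = d := by
  induction c, d using SimpleGraph.ConnectedComponent.ind₂ with
  | _ γ δ => exact comp_inj G k T A B hcap hcup hedge h1 h2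

include hcap hcup hedge in
lemma inp_G (hA : T ⊆ A) (hB : T ⊆ B)
    (inpA : INP (CSG (G.induce A) k (Tsub A T)) (csgLabel (G.induce A) k (Tsub A T)))
    (inpB : INP (CSG (G.induce B) k (Tsub B T)) (csgLabel (G.induce B) k (Tsub B T))) :
    INP (CSG G k T) (csgLabel G k T) := by
  intro u v w huv huw hvw
  intro heq
  apply hvw
  have hlabA : csgLabel (G.induce A) k (Tsub A T) (projC G k T A v) =
      csgLabel (G.induce A) k (Tsub A T) (projC G k T A w) := by
    funext s
    exact (label_comm G k T A hA v s.1.1 s.2).trans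
      ((congrFun heq ⟨s.1.1, s.2⟩).trans (label_comm G k T A hA w s.1.1 s.2).symm)
  have hlabB : csgLabel (G.induce B) k (Tsub B T) (projC G k T B v) =
      csgLabel (G.induce B) k (Tsub B T) (projC G k T B w) := by
    funext s
    exact (label_comm G k T B hB v s.1.1 s.2).trans
      ((congrFun heq ⟨s.1.1, s.2⟩).trans (label_comm G k T B hB w s.1.1 s.2).symm)
  have hpA : projC G k T A v = projC G k T A w := by
    by_contra hne
    exact inpA _ _ _ (adj_proj G k T A hA huv) (adj_proj G k T A hA huw) hne hlabA
  have hpB : projC G k T B v = projC G k T B w := by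
    by_contra hne
    exact inpB _ _ _ (adj_proj G k T B hB huv) (adj_proj G k T B hB huw) hne hlabB
  exact comp_inj' G k T A B hcap hcup hedge hpA hpB

include hcap hcup hedge in
lemma acyclic_G (hA : T ⊆ A) (hB : T ⊆ B)
    (acA : IsAcyclic (CSG (G.induce A) k (Tsub A T)))
    (inpA : INP (CSG (G.induce A) k (Tsub A T)) (csgLabel (G.induce A) k (Tsub A T)))
    (inpB : INP (CSG (G.induce B) k (Tsub B T)) (csgLabel (G.induce B) k (Tsub B T))) :
    IsAcyclic (CSG G k T) := by
  have hinp := inp_G G k T A B hcap hcup hedge hA hB inpA inpB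
  refine acyclic_of_locally_injective
    (⟨projC G k T A, fun h => adj_proj G k T A hA h⟩ :
      CSG G k T →g CSG (G.induce A) k (Tsub A T)) ?_ acA
  intro a b c hab hbc hac hpe
  apply hinp b a c hab.symm hbc hac
  funext s
  exact ((label_comm G k T A hA a s.1 s.2).symm.trans
    (congrFun (congrArg (csgLabel (G.induce A) k (Tsub A T)) hpe) ⟨⟨s.1, hA s.2⟩, s.2⟩)).trans
    (label_comm G k T A hA c s.1 s.2)

end Edge
section Key
variable {V : Type} (G : SimpleGraph V) (k : ℕ) (T A B : Set V)
  (hT : G.IsClique T) (hA : T ⊆ A) (hB : T ⊆ B)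
  (hcap : A ∩ B = T) (hcup : A ∪ B = Set.univ)
  (hedge : ∀ u w : V, G.Adj u w → (u ∈ A ∧ w ∈ A) ∨ (u ∈ B ∧ w ∈ B))
  (hcc : IsColorComplete k (CSG (G.induce A) k (Tsub A T)) (csgLabel (G.induce A) k (Tsub A T)))

include hA hB hcap hcup hedge hcc in
lemma projB_inj : Function.Injective (projC G k T B) := by
  intro c d h
  apply comp_inj' G k T A B hcap hcup hedge ?_ h
  have hlabeq : csgLabel (G.induce A) k (Tsub A T) (projC G k T A c) =
      csgLabel (G.induce A) k (Tsub A T) (projC G k T A d) := by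
    funext s
    exact ((((label_comm G k T A hA c s.1.1 s.2).trans
      (label_comm G k T B hB c s.1.1 s.2).symm).trans
      (congrFun (congrArg (csgLabel (G.induce B) k (Tsub B T)) h) ⟨⟨s.1.1, hB s.2⟩, s.2⟩)).trans
      (label_comm G k T B hB d s.1.1 s.2)).trans
      (label_comm G k T A hA d s.1.1 s.2).symm
  exact (hcc.2.1 _ (hcc.1 (projC G k T A c))).unique rfl hlabeq.symm

include hT hA hB hcap hcup hedge hcc in
lemma projB_surj : Function.Surjective (projC G k T B) := by
  intro c₂
  induction c₂ using SimpleGraph.ConnectedComponent.ind with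
  | _ β =>
  set f : ↥(Tsub A T) → Fin k := fun s => β.1 ⟨s.1.1, hB s.2⟩ with hf
  have finj : Function.Injective f := by
    intro s s' heq
    by_contra hne
    have hne1 : s.1.1 ≠ s'.1.1 := by
      intro h'
      exact hne (Subtype.ext (Subtype.ext h'))
    exact β.2 ⟨s.1.1, hB s.2⟩ ⟨s'.1.1, hB s'.2⟩ (hT s.2 s'.2 hne1) heq
  obtain ⟨x, hx, -⟩ := hcc.2.1 f finj
  obtain ⟨γ₁, hγ₁⟩ := x.exists_rep
  have hag : Agrees k A B γ₁.1 β.1 := by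
    intro t h1 h2
    have ht : t ∈ T := hcap ▸ (⟨h1, h2⟩ : t ∈ A ∩ B)
    have h3 := congrFun hx ⟨⟨t, h1⟩, ht⟩
    rw [← hγ₁] at h3
    exact h3
  refine ⟨csgNode G k T (gl G k A B hcup hedge γ₁ β hag), ?_⟩
  show csgNode (G.induce B) k (Tsub B T)
    (restrictColoring G k B (gl G k A B hcup hedge γ₁ β hag)) = _
  rw [restrict_gl_B G k A B hcup hedge γ₁ β hag]
  rfl

include hA hB hcap hcup hedge hcc in
lemma adj_back {c d : CSGNode G k T}
    (h : (CSG (G.induce B) k (Tsub B T)).Adj (projC G k T B c) (projC G k T B d)) :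
    (CSG G k T).Adj c d := by
  classical
  have hlabne := quot_adj_label_ne _ _ h
  obtain ⟨hne2, β, β', hβ, hβ', hadjB⟩ := h
  obtain ⟨w₂, hw₂, hun₂⟩ := hadjB
  have hlab' : csgLabelFun (G.induce B) k (Tsub B T) β ≠
      csgLabelFun (G.induce B) k (Tsub B T) β' := by
    rw [← hβ, ← hβ'] at hlabne; exact hlabne
  obtain ⟨s, hsne⟩ := Function.ne_iff.mp hlab'
  have hws : w₂ = s.1 := (hun₂ s.1 hsne).symm
  have htT : s.1.1 ∈ T := s.2
  -- labels of the A-side projections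
  have hxc : csgLabel (G.induce A) k (Tsub A T) (projC G k T A c) =
      (fun r : ↥(Tsub A T) => β.1 ⟨r.1.1, hB r.2⟩) := by
    funext r
    exact ((label_comm G k T A hA c r.1.1 r.2).trans
      (label_comm G k T B hB c r.1.1 r.2).symm).trans
      (congrFun (congrArg (csgLabel (G.induce B) k (Tsub B T)) hβ.symm) ⟨⟨r.1.1, hB r.2⟩, r.2⟩)
  have hxd : csgLabel (G.induce A) k (Tsub A T) (projC G k T A d) =
      (fun r : ↥(Tsub A T) => β'.1 ⟨r.1.1, hB r.2⟩) := by
    funext r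
    exact ((label_comm G k T A hA d r.1.1 r.2).trans
      (label_comm G k T B hB d r.1.1 r.2).symm).trans
      (congrFun (congrArg (csgLabel (G.induce B) k (Tsub B T)) hβ'.symm) ⟨⟨r.1.1, hB r.2⟩, r.2⟩)
  -- adjacency on the A side
  have hadjA : (CSG (G.induce A) k (Tsub A T)).Adj (projC G k T A c) (projC G k T A d) := by
    refine (hcc.2.2 _ _).mpr ⟨⟨⟨s.1.1, hA htT⟩, htT⟩, ?_, ?_⟩
    · show csgLabel _ _ _ (projC G k T A c) _ ≠ csgLabel _ _ _ (projC G k T A d) _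
      rw [hxc, hxd]
      exact hsne
    · intro r hr
      rw [hxc, hxd] at hr
      have : (⟨r.1.1, hB r.2⟩ : ↥B) = w₂ := hun₂ _ hr
      apply Subtype.ext
      apply Subtype.ext
      show r.1.1 = s.1.1
      rw [hws] at this
      exact congrArg Subtype.val this
  obtain ⟨hneA, a, b, ha, hb, hadjA'⟩ := hadjA
  obtain ⟨w₁, hw₁, hun₁⟩ := hadjA'
  have hlaba : csgLabelFun (G.induce A) k (Tsub A T) a =
      (fun r : ↥(Tsub A T) => β.1 ⟨r.1.1, hB r.2⟩) :=
    (congrArg (csgLabel (G.induce A) k (Tsub A T)) ha).trans hxc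
  have hlabb : csgLabelFun (G.induce A) k (Tsub A T) b =
      (fun r : ↥(Tsub A T) => β'.1 ⟨r.1.1, hB r.2⟩) :=
    (congrArg (csgLabel (G.induce A) k (Tsub A T)) hb).trans hxd
  have hvalt : a.1 ⟨s.1.1, hA htT⟩ ≠ b.1 ⟨s.1.1, hA htT⟩ := by
    have ea := congrFun hlaba ⟨⟨s.1.1, hA htT⟩, htT⟩
    have eb := congrFun hlabb ⟨⟨s.1.1, hA htT⟩, htT⟩
    rw [show (csgLabelFun (G.induce A) k (Tsub A T) a ⟨⟨s.1.1, hA htT⟩, htT⟩ =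
      a.1 ⟨s.1.1, hA htT⟩) from rfl] at ea
    rw [show (csgLabelFun (G.induce A) k (Tsub A T) b ⟨⟨s.1.1, hA htT⟩, htT⟩ =
      b.1 ⟨s.1.1, hA htT⟩) from rfl] at eb
    rw [ea, eb]
    exact hsne
  have hw₁t : w₁ = ⟨s.1.1, hA htT⟩ := (hun₁ _ hvalt).symm
  have haga : Agrees k A B a.1 β.1 := by
    intro τ h1 h2
    have ht : τ ∈ T := hcap ▸ (⟨h1, h2⟩ : τ ∈ A ∩ B)
    exact congrFun hlaba ⟨⟨τ, h1⟩, ht⟩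
  have hagb : Agrees k A B b.1 β'.1 := by
    intro τ h1 h2
    have ht : τ ∈ T := hcap ▸ (⟨h1, h2⟩ : τ ∈ A ∩ B)
    exact congrFun hlabb ⟨⟨τ, h1⟩, ht⟩
  have hglc : csgNode G k T (gl G k A B hcup hedge a β haga) = c := by
    apply comp_inj' G k T A B hcap hcup hedge
    · show csgNode (G.induce A) k (Tsub A T)
        (restrictColoring G k A (gl G k A B hcup hedge a β haga)) = _
      rw [restrict_gl_A G k A B hcup hedge a β haga]
      exact ha
    · show csgNode (G.induce B) k (Tsub B T)
        (restrictColoring G k B (gl G k A B hcup hedge a β haga)) = _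
      rw [restrict_gl_B G k A B hcup hedge a β haga]
      exact hβ
  have hgld : csgNode G k T (gl G k A B hcup hedge b β' hagb) = d := by
    apply comp_inj' G k T A B hcap hcup hedge
    · show csgNode (G.induce A) k (Tsub A T)
        (restrictColoring G k A (gl G k A B hcup hedge b β' hagb)) = _
      rw [restrict_gl_A G k A B hcup hedge b β' hagb]
      exact hb
    · show csgNode (G.induce B) k (Tsub B T)
        (restrictColoring G k B (gl G k A B hcup hedge b β' hagb)) = _
      rw [restrict_gl_B G k A B hcup hedge b β' hagb]
      exact hβ'
  refine ⟨fun he => hne2 (congrArg (projC G k T B) he),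
    gl G k A B hcup hedge a β haga, gl G k A B hcup hedge b β' hagb, hglc, hgld, ?_⟩
  refine ⟨s.1.1, ?_, ?_⟩
  · show glue k A B hcup a.1 β.1 s.1.1 ≠ glue k A B hcup b.1 β'.1 s.1.1
    rw [glue_A k A B hcup (hA htT), glue_A k A B hcup (hA htT)]
    exact hvalt
  · intro u hu
    have hu' : glue k A B hcup a.1 β.1 u ≠ glue k A B hcup b.1 β'.1 u := hu
    by_cases huA : u ∈ A
    · rw [glue_A k A B hcup huA, glue_A k A B hcup huA] at hu'
      have := hun₁ ⟨u, huA⟩ hu'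
      rw [hw₁t] at this
      exact congrArg Subtype.val this
    · rw [glue_nA k A B hcup huA, glue_nA k A B hcup huA] at hu'
      have := hun₂ _ hu'
      rw [hws] at this
      exact congrArg Subtype.val this

include hT hA hB hcap hcup hedge hcc in
lemma key : ∃ φ : CSG G k T ≃g CSG (G.induce B) k (Tsub B T),
    ∀ (x : CSGNode G k T) (t : V) (ht : t ∈ T),
      csgLabel G k T x ⟨t, ht⟩ =
        csgLabel (G.induce B) k (Tsub B T) (φ x) ⟨⟨t, hB ht⟩, ht⟩ := by
  have hbij : Function.Bijective (projC G k T B) :=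
    ⟨projB_inj G k T A B hA hB hcap hcup hedge hcc,
     projB_surj G k T A B hT hA hB hcap hcup hedge hcc⟩
  refine ⟨⟨Equiv.ofBijective _ hbij, ?_⟩, ?_⟩
  · intro a b
    exact ⟨adj_back G k T A B hA hB hcap hcup hedge hcc,
      adj_proj G k T B hB⟩
  · intro x t ht
    exact (label_comm G k T B hB x t ht).symm

end Key
/-- the join operation preserves the invariant: if one of `C^c_k(G₁,T)`,
`C^c_k(G₂,T)` is an `(|T|,k)`-color-complete graph, then `C^c_k(G,T)` equals the other
graph (up to label-preserving isomorphism); if both are forests satisfying the INP,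
then so is `C^c_k(G,T)`. -/
theorem statement_13 {V : Type} [Fintype V] [DecidableEq V] (G : SimpleGraph V)
    (k : ℕ) (hk : 1 ≤ k) (hchord : Chordal G)
    (hcol : ∃ α : V → Fin k, IsColoring G k α)
    (T V₁ V₂ : Set V) (hT : G.IsClique T) (h1 : T ⊆ V₁) (h2 : T ⊆ V₂)
    (hcap : V₁ ∩ V₂ = T) (hcup : V₁ ∪ V₂ = Set.univ) (hne1 : V₁ ≠ T) (hne2 : V₂ ≠ T)
    (hedge : ∀ u w : V, G.Adj u w → (u ∈ V₁ ∧ w ∈ V₁) ∨ (u ∈ V₂ ∧ w ∈ V₂)) :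
    (IsColorComplete k (CSG (G.induce V₁) k (Tsub V₁ T))
        (csgLabel (G.induce V₁) k (Tsub V₁ T)) →
      ∃ φ : CSG G k T ≃g CSG (G.induce V₂) k (Tsub V₂ T),
        ∀ (x : CSGNode G k T) (t : V) (ht : t ∈ T),
          csgLabel G k T x ⟨t, ht⟩ =
            csgLabel (G.induce V₂) k (Tsub V₂ T) (φ x) ⟨⟨t, h2 ht⟩, ht⟩) ∧
    (IsColorComplete k (CSG (G.induce V₂) k (Tsub V₂ T))
        (csgLabel (G.induce V₂) k (Tsub V₂ T)) →
      ∃ φ : CSG G k T ≃g CSG (G.induce V₁) k (Tsub V₁ T),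
        ∀ (x : CSGNode G k T) (t : V) (ht : t ∈ T),
          csgLabel G k T x ⟨t, ht⟩ =
            csgLabel (G.induce V₁) k (Tsub V₁ T) (φ x) ⟨⟨t, h1 ht⟩, ht⟩) ∧
    ((IsAcyclic (CSG (G.induce V₁) k (Tsub V₁ T)) ∧
        INP (CSG (G.induce V₁) k (Tsub V₁ T)) (csgLabel (G.induce V₁) k (Tsub V₁ T)) ∧
        IsAcyclic (CSG (G.induce V₂) k (Tsub V₂ T)) ∧
        INP (CSG (G.induce V₂) k (Tsub V₂ T)) (csgLabel (G.induce V₂) k (Tsub V₂ T))) →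
      (IsAcyclic (CSG G k T) ∧ INP (CSG G k T) (csgLabel G k T))) := by
  have hcap' : V₂ ∩ V₁ = T := by rw [Set.inter_comm]; exact hcap
  have hcup' : V₂ ∪ V₁ = Set.univ := by rw [Set.union_comm]; exact hcup
  have hedge' : ∀ u w : V, G.Adj u w → (u ∈ V₂ ∧ w ∈ V₂) ∨ (u ∈ V₁ ∧ w ∈ V₁) :=
    fun u w h => (hedge u w h).symm
  refine ⟨?_, ?_, ?_⟩
  · intro hcc
    exact key G k T V₁ V₂ hT h1 h2 hcap hcup hedge hcc
  · intro hcc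
    exact key G k T V₂ V₁ hT h2 h1 hcap' hcup' hedge' hcc
  · rintro ⟨ac1, inp1, ac2, inp2⟩
    exact ⟨acyclic_G G k T V₁ V₂ hcap hcup hedge h1 h2 ac1 inp1 inp2,
      inp_G G k T V₁ V₂ hcap hcup hedge h1 h2 inp1 inp2⟩
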